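/- Let y ∈ ℂ^W with y[W−1] ≠ 0, let β₁,…,β_{W−1} be the roots of ŷ(ω) (with multiplicity), and suppose all roots are nonzero, pairwise distinct, and none lie on the unit circle. Then the number of vectors y' ∈ ℂ^W with y'[W−1] ≠ 0 satisfying |ŷ'(ω)| = |ŷ(ω)| for all |ω| = 1, counted up to multiplication by a unimodular global phase, is exactly 2^{W−1}. -/

import Mathlib

open Polynomial Complex

noncomputable def refl' (z : ℂ) : ℂ := ((starRingEnd ℂ) z)⁻¹

lemma refl_refl (z : ℂ) : refl' (refl' z) = z := by
  simp [refl', map_inv₀]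

lemma circle_infinite : {z : ℂ | ‖z‖ = 1}.Infinite := by
  apply Set.infinite_of_injective_forall_mem
    (f := fun t : ℝ => (1 + t * Complex.I) / (1 - t * Complex.I))
  · intro s t h
    have hs : (1 : ℂ) - s * Complex.I ≠ 0 := by
      intro h0
      have := congrArg Complex.re h0
      simp at this
    have ht : (1 : ℂ) - t * Complex.I ≠ 0 := by
      intro h0
      have := congrArg Complex.re h0
      simp at this
    rw [div_eq_div_iff hs ht] at h
    have h2 : (s : ℂ) * Complex.I = t * Complex.I := by linear_combination h / 2
    have := mul_right_cancel₀ Complex.I_ne_zero h2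
    exact_mod_cast this
  · intro t
    have ht : (1 : ℂ) - t * Complex.I ≠ 0 := by
      intro h0
      have := congrArg Complex.re h0
      simp at this
    have hconj : (starRingEnd ℂ) (1 - t * Complex.I) = 1 + t * Complex.I := by
      simp [map_sub, map_mul, Complex.conj_I]
    show ‖(1 + t * Complex.I) / (1 - t * Complex.I)‖ = 1
    rw [norm_div, ← hconj, Complex.norm_conj]
    exact div_self (norm_ne_zero_iff.mpr ht)

lemma abs_refl_root {ω βv : ℂ} (hω : ‖ω‖ = 1) (hβ : βv ≠ 0) :
    ‖βv‖ * ‖ω - refl' βv‖ = ‖ω - βv‖ := by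
  have hc : (starRingEnd ℂ) βv ≠ 0 := by simpa using hβ
  have hω0 : ω ≠ 0 := by intro h; rw [h] at hω; simp at hω
  have h1 : ‖βv‖ * ‖ω - refl' βv‖
      = ‖(starRingEnd ℂ) βv * ω - 1‖ := by
    rw [← Complex.norm_conj βv, ← norm_mul]
    congr 1
    rw [mul_sub, refl', mul_inv_cancel₀ hc]
  rw [h1, ← Complex.norm_conj]
  have h2 : (starRingEnd ℂ) ((starRingEnd ℂ) βv * ω - 1) = βv * (starRingEnd ℂ) ω - 1 := by
    simp
  rw [h2]
  have hωc : (starRingEnd ℂ) ω = ω⁻¹ := by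
    rw [Complex.inv_def]
    simp [Complex.normSq_eq_norm_sq, hω]
  rw [hωc]
  have : βv * ω⁻¹ - 1 = (βv - ω) * ω⁻¹ := by field_simp
  rw [this, norm_mul, norm_inv, hω]
  simp [norm_sub_rev]

noncomputable def Fpoly (a : ℂ) (M : Multiset ℂ) : Polynomial ℂ :=
  Polynomial.C ((Complex.normSq a : ℝ) : ℂ) *
    (M.map fun z => (Polynomial.X - Polynomial.C z) *
      (Polynomial.C 1 - Polynomial.C ((starRingEnd ℂ) z) * Polynomial.X)).prod

lemma conj_circ {ω : ℂ} (hω : ‖ω‖ = 1) : (starRingEnd ℂ) ω = ω⁻¹ := by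
  rw [Complex.inv_def]
  simp [Complex.normSq_eq_norm_sq, hω]

lemma mul_conj_circ {ω : ℂ} (hω : ‖ω‖ = 1) : ω * (starRingEnd ℂ) ω = 1 := by
  rw [Complex.mul_conj]
  simp [Complex.normSq_eq_norm_sq, hω]

lemma eval_Fpoly (a : ℂ) (M : Multiset ℂ) {ω : ℂ} (hω : ‖ω‖ = 1) :
    Polynomial.eval ω (Fpoly a M)
      = ω ^ Multiset.card M *
        ((Complex.normSq (a * (M.map fun z => ω - z).prod) : ℝ) : ℂ) := by
  have h1 : Polynomial.eval ω (Fpoly a M)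
      = ((Complex.normSq a : ℝ) : ℂ) *
        (M.map fun z => (ω - z) * (1 - (starRingEnd ℂ) z * ω)).prod := by
    simp [Fpoly, Polynomial.eval_multiset_prod, Multiset.map_map, Function.comp]
  have h2 : ∀ z : ℂ, (ω - z) * (1 - (starRingEnd ℂ) z * ω)
      = ω * ((Complex.normSq (ω - z) : ℝ) : ℂ) := by
    intro z
    have : 1 - (starRingEnd ℂ) z * ω = ω * ((starRingEnd ℂ) ω - (starRingEnd ℂ) z) := by
      rw [mul_sub]
      rw [mul_conj_circ hω]
      ring
    rw [this, ← Complex.mul_conj (ω - z)]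
    rw [map_sub]
    ring
  have h3 : (M.map fun z => (ω - z) * (1 - (starRingEnd ℂ) z * ω)).prod
      = ω ^ Multiset.card M * (M.map fun z => ((Complex.normSq (ω - z) : ℝ) : ℂ)).prod := by
    rw [Multiset.map_congr rfl (fun z _ => h2 z)]
    rw [show (fun z => ω * ((Complex.normSq (ω - z) : ℝ) : ℂ))
        = fun z => (fun _ => ω) z * (fun w => ((Complex.normSq (ω - w) : ℝ) : ℂ)) z from rfl]
    rw [Multiset.prod_map_mul]
    congr 1
    simp [Multiset.map_const', Multiset.prod_replicate]
  have h4 : ((Complex.normSq (a * (M.map fun z => ω - z).prod) : ℝ) : ℂ)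
      = ((Complex.normSq a : ℝ) : ℂ) *
        (M.map fun z => ((Complex.normSq (ω - z) : ℝ) : ℂ)).prod := by
    rw [map_mul, Complex.ofReal_mul]
    congr 1
    rw [map_multiset_prod Complex.normSq, Multiset.map_map]
    rw [show ((((Multiset.map (⇑Complex.normSq ∘ fun z => ω - z) M).prod : ℝ)) : ℂ)
      = Complex.ofRealHom (Multiset.map (⇑Complex.normSq ∘ fun z => ω - z) M).prod from rfl]
    rw [← Multiset.prod_hom _ Complex.ofRealHom, Multiset.map_map]
    rfl
  rw [h1, h3, h4]
  ring

lemma Fpoly_factored (a : ℂ) (M : Multiset ℂ) (h0 : (0:ℂ) ∉ M) :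
    Fpoly a M = Polynomial.C (((Complex.normSq a : ℝ) : ℂ) *
        (M.map fun z => -(starRingEnd ℂ) z).prod) *
      ((M + M.map refl').map fun z => Polynomial.X - Polynomial.C z).prod := by
  have h2 : ∀ z ∈ M, (Polynomial.X - Polynomial.C z) *
      (Polynomial.C 1 - Polynomial.C ((starRingEnd ℂ) z) * Polynomial.X)
      = Polynomial.C (-(starRingEnd ℂ) z) *
        ((Polynomial.X - Polynomial.C z) * (Polynomial.X - Polynomial.C (refl' z))) := by
    intro z hz
    have hzz : z ≠ 0 := fun h => h0 (h ▸ hz)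
    have hz0 : (starRingEnd ℂ) z ≠ 0 := by
      intro h
      apply hzz
      have := congrArg (starRingEnd ℂ) h
      simpa using this
    have : Polynomial.C 1 - Polynomial.C ((starRingEnd ℂ) z) * Polynomial.X
        = Polynomial.C (-(starRingEnd ℂ) z) * (Polynomial.X - Polynomial.C (refl' z)) := by
      rw [refl', mul_sub, ← Polynomial.C_mul, neg_mul, mul_inv_cancel₀ hz0,
        Polynomial.C_neg, Polynomial.C_neg]
      ring
    rw [this]; ring
  unfold Fpoly
  rw [Multiset.map_congr rfl h2]
  rw [show (fun z => Polynomial.C (-(starRingEnd ℂ) z) *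
      ((Polynomial.X - Polynomial.C z) * (Polynomial.X - Polynomial.C (refl' z))))
      = fun z => (fun w => Polynomial.C (-(starRingEnd ℂ) w)) z *
        ((fun w => (Polynomial.X - Polynomial.C w) * (Polynomial.X - Polynomial.C (refl' w))) z)
      from rfl]
  rw [Multiset.prod_map_mul, Multiset.prod_map_mul]
  rw [Multiset.map_add, Multiset.prod_add]
  rw [Polynomial.C_mul, map_multiset_prod (Polynomial.C : ℂ →+* Polynomial ℂ),
    Multiset.map_map, Multiset.map_map]
  simp only [Function.comp_def]
  ring

lemma roots_C_mul_prod (a : ℂ) (ha : a ≠ 0) (M : Multiset ℂ) :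
    (Polynomial.C a * (M.map fun z => Polynomial.X - Polynomial.C z).prod).roots = M := by
  rw [Polynomial.roots_C_mul _ ha, Polynomial.roots_multiset_prod_X_sub_C]

lemma monic_prod_XC (M : Multiset ℂ) :
    ((M.map fun z => Polynomial.X - Polynomial.C z).prod).Monic := by
  exact Polynomial.monic_multiset_prod_of_monic M _ (fun z _ => Polynomial.monic_X_sub_C z)

lemma natDegree_C_mul_prod (a : ℂ) (ha : a ≠ 0) (M : Multiset ℂ) :
    (Polynomial.C a * (M.map fun z => Polynomial.X - Polynomial.C z).prod).natDegree
      = Multiset.card M := by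
  rw [Polynomial.natDegree_C_mul ha, Polynomial.natDegree_multiset_prod_X_sub_C_eq_card]

lemma coeff_top_C_mul_prod (a : ℂ) (M : Multiset ℂ) :
    (Polynomial.C a * (M.map fun z => Polynomial.X - Polynomial.C z).prod).coeff
      (Multiset.card M) = a := by
  have hm := monic_prod_XC M
  have hd := Polynomial.natDegree_multiset_prod_X_sub_C_eq_card M
  rw [Polynomial.coeff_C_mul, ← hd, ← Polynomial.leadingCoeff, hm.leadingCoeff, mul_one]

noncomputable def polyOf (W : ℕ) (v : Fin W → ℂ) : Polynomial ℂ :=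
  ∑ n : Fin W, Polynomial.C (v n) * Polynomial.X ^ (n : ℕ)

lemma polyOf_eval (W : ℕ) (v : Fin W → ℂ) (ω : ℂ) :
    Polynomial.eval ω (polyOf W v) = ∑ n : Fin W, v n * ω ^ (n : ℕ) := by
  simp [polyOf, Polynomial.eval_finset_sum]

lemma polyOf_coeff (W : ℕ) (v : Fin W → ℂ) (n : Fin W) :
    (polyOf W v).coeff (n : ℕ) = v n := by
  rw [polyOf, Polynomial.finset_sum_coeff]
  rw [Finset.sum_eq_single n]
  · simp
  · intro k _ hk
    rw [Polynomial.coeff_C_mul, Polynomial.coeff_X_pow]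
    rw [if_neg (fun h => hk (Fin.ext h.symm))]
    ring
  · simp

lemma polyOf_degree_le (W : ℕ) (hW : 1 ≤ W) (v : Fin W → ℂ) :
    (polyOf W v).degree ≤ ((W - 1 : ℕ) : WithBot ℕ) := by
  apply le_trans (Polynomial.degree_sum_le _ _)
  apply Finset.sup_le
  intro n _
  apply le_trans (Polynomial.degree_C_mul_X_pow_le _ _)
  exact_mod_cast Nat.cast_le.mpr (by omega : (n : ℕ) ≤ W - 1)

lemma polyOf_natDegree (W : ℕ) (hW : 1 ≤ W) (v : Fin W → ℂ)
    (hv : v ⟨W - 1, by omega⟩ ≠ 0) : (polyOf W v).natDegree = W - 1 := by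
  apply le_antisymm
  · exact Polynomial.natDegree_le_iff_degree_le.mpr (polyOf_degree_le W hW v)
  · apply Polynomial.le_natDegree_of_ne_zero
    rw [show (W - 1 : ℕ) = ((⟨W - 1, by omega⟩ : Fin W) : ℕ) from rfl, polyOf_coeff]
    exact hv

lemma poly_ext_of_coeff (W : ℕ) (p q : Polynomial ℂ)
    (hp : p.natDegree < W) (hq : q.natDegree < W)
    (h : ∀ n : Fin W, p.coeff (n : ℕ) = q.coeff (n : ℕ)) : p = q := by
  ext n
  by_cases hn : n < W
  · exact h ⟨n, hn⟩
  · rw [Polynomial.coeff_eq_zero_of_natDegree_lt (by omega),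
      Polynomial.coeff_eq_zero_of_natDegree_lt (by omega)]

open Classical in
lemma key_comb {α : Type*} [Fintype α] (b : α → ℂ) (r : ℂ → ℂ)
    (hrr : ∀ i, r (r (b i)) = b i)
    (hbinj : Function.Injective b)
    (hrinj : ∀ i j, r (b i) = r (b j) → i = j)
    (hdisj : ∀ i j, b i ≠ r (b j))
    (Mγ : Multiset ℂ) (hcard : Multiset.card Mγ = Fintype.card α)
    (hM : Mγ + Mγ.map r = Finset.univ.val.map b + (Finset.univ.val.map b).map r) :
    ∃ I : Finset α,
      Mγ = Finset.univ.val.map (fun i => if i ∈ I then r (b i) else b i) := by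
  have hndRHS : (Finset.univ.val.map b + (Finset.univ.val.map b).map r).Nodup := by
    rw [Multiset.nodup_add]
    refine ⟨?_, ?_, ?_⟩
    · exact Multiset.Nodup.map hbinj Finset.univ.nodup
    · rw [Multiset.map_map]
      apply Multiset.Nodup.map_on ?_ Finset.univ.nodup
      intro i _ j _ h
      exact hrinj i j h
    · rw [Multiset.disjoint_left]
      intro x hx hx2
      obtain ⟨i, _, rfl⟩ := Multiset.mem_map.mp hx
      rw [Multiset.map_map] at hx2
      obtain ⟨j, _, hj⟩ := Multiset.mem_map.mp hx2
      exact hdisj i j hj.symm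
  have hndL : (Mγ + Mγ.map r).Nodup := hM ▸ hndRHS
  rw [Multiset.nodup_add] at hndL
  obtain ⟨hnd1, hnd2, hdisj12⟩ := hndL
  have hsub : ∀ x ∈ Mγ, x ∈ Finset.univ.val.map b + (Finset.univ.val.map b).map r := by
    intro x hx
    rw [← hM]
    exact Multiset.mem_add.mpr (Or.inl hx)
  have hclaim : ∀ i, ¬(b i ∈ Mγ ∧ r (b i) ∈ Mγ) := by
    rintro i ⟨h1, h2⟩
    exact (Multiset.disjoint_left.mp hdisj12) h2 (Multiset.mem_map_of_mem r h1)
  refine ⟨Finset.univ.filter (fun i => r (b i) ∈ Mγ), ?_⟩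
  set I := Finset.univ.filter (fun i => r (b i) ∈ Mγ) with hI
  set g : α → ℂ := fun i => if i ∈ I then r (b i) else b i with hg
  have hginj : Function.Injective g := by
    intro i j h
    simp only [hg] at h
    split_ifs at h with h1 h2 h2
    · exact hrinj i j h
    · exact absurd h.symm (hdisj j i)
    · exact absurd h (hdisj i j)
    · exact hbinj h
  have hndMI : (Finset.univ.val.map g).Nodup := Multiset.Nodup.map hginj Finset.univ.nodup
  have hsub2 : Mγ ⊆ Finset.univ.val.map g := by
    intro x hx
    rcases Multiset.mem_add.mp (hsub x hx) with h | h
    · obtain ⟨i, _, rfl⟩ := Multiset.mem_map.mp h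
      have hiI : i ∉ I := by
        simp only [hI, Finset.mem_filter]
        rintro ⟨-, h2⟩
        exact hclaim i ⟨hx, h2⟩
      refine Multiset.mem_map.mpr ⟨i, Finset.mem_univ i, ?_⟩
      simp [hg, hiI]
    · rw [Multiset.map_map] at h
      obtain ⟨i, _, rfl⟩ := Multiset.mem_map.mp h
      have hiI : i ∈ I := by
        simp only [hI, Finset.mem_filter]
        exact ⟨Finset.mem_univ i, hx⟩
      refine Multiset.mem_map.mpr ⟨i, Finset.mem_univ i, ?_⟩
      simp [hg, hiI]
  have hle : Mγ ≤ Finset.univ.val.map g := (Multiset.le_iff_subset hnd1).mpr hsub2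
  have hcards : Multiset.card (Finset.univ.val.map g) ≤ Multiset.card Mγ := by
    rw [Multiset.card_map, hcard]
    rfl
  exact Multiset.eq_of_le_of_card_le hle hcards

lemma eval_Fpoly_zero (a : ℂ) (M : Multiset ℂ) :
    Polynomial.eval 0 (Fpoly a M)
      = ((Complex.normSq a : ℝ) : ℂ) * (M.map fun z => -z).prod := by
  rw [Fpoly, Polynomial.eval_mul, Polynomial.eval_C, Polynomial.eval_multiset_prod,
    Multiset.map_map]
  congr 1
  congr 1
  apply Multiset.map_congr rfl
  intro z _
  simp

/-- for a vector whose Fourier transform has nonzero, pairwise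
distinct roots, none on the unit circle (and generic: no root is the
conjugate reflection of another), the set of vectors with the same Fourier
intensity function, counted up to a global phase, has exactly `2^(W−1)`
elements. -/
theorem stmt_15 (W : ℕ) (hW : 2 ≤ W) (y : Fin W → ℂ)
    (β : Fin (W - 1) → ℂ)
    (hy : y ⟨W - 1, by omega⟩ ≠ 0)
    (hfac : ∀ ω : ℂ, ∑ n : Fin W, y n * ω ^ (n : ℕ)
      = y ⟨W - 1, by omega⟩ * ∏ i, (ω - β i))
    (hβ0 : ∀ i, β i ≠ 0)
    (hβinj : Function.Injective β)
    (hβcirc : ∀ i, ‖β i‖ ≠ 1)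
    (hgen : ∀ i j, i ≠ j → β i ≠ 1 / (starRingEnd ℂ) (β j)) :
    ∃ S : Set (Fin W → ℂ), S.Finite ∧ S.ncard = 2 ^ (W - 1)
      ∧ (∀ v ∈ S, v ⟨W - 1, by omega⟩ ≠ 0
          ∧ ∀ ω : ℂ, ‖ω‖ = 1 →
              ‖∑ n : Fin W, v n * ω ^ (n : ℕ)‖
                = ‖∑ n : Fin W, y n * ω ^ (n : ℕ)‖)
      ∧ ∀ y' : Fin W → ℂ, y' ⟨W - 1, by omega⟩ ≠ 0 →
          (∀ ω : ℂ, ‖ω‖ = 1 →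
            ‖∑ n : Fin W, y' n * ω ^ (n : ℕ)‖
              = ‖∑ n : Fin W, y n * ω ^ (n : ℕ)‖) →
          ∃! v, v ∈ S ∧ ∃ θ : ℝ,
            y' = fun n => Complex.exp (θ * Complex.I) * v n := by
  classical
  have hWm : W - 1 < W := by omega
  set c : ℂ := y ⟨W - 1, hWm⟩ with hcdef
  have hc0 : c ≠ 0 := hy
  -- basic facts about the roots
  have hbref : ∀ i j : Fin (W - 1), β i ≠ refl' (β j) := by
    intro i j h
    by_cases hij : i = j
    · subst hij
      apply hβcirc i
      have hcne : (starRingEnd ℂ) (β i) ≠ 0 := by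
        intro h0
        apply hβ0 i
        have := congrArg (starRingEnd ℂ) h0
        simpa using this
      have h1 : β i * (starRingEnd ℂ) (β i) = 1 := by
        nth_rewrite 1 [h]
        rw [refl']
        exact inv_mul_cancel₀ hcne
      rw [Complex.mul_conj] at h1
      have h2 : Complex.normSq (β i) = 1 := by exact_mod_cast h1
      rw [Complex.norm_def, h2, Real.sqrt_one]
    · exact hgen i j hij (by rw [one_div]; exact h)
  have hrinj : ∀ i j : Fin (W - 1), refl' (β i) = refl' (β j) → i = j := by
    intro i j h
    have h2 : (starRingEnd ℂ) (β i) = (starRingEnd ℂ) (β j) := inv_injective h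
    have h3 := congrArg (starRingEnd ℂ) h2
    simp only [Complex.conj_conj] at h3
    exact hβinj h3
  set Mβ : Multiset ℂ := Finset.univ.val.map β with hMβdef
  have hMβcard : Multiset.card Mβ = W - 1 := by
    rw [hMβdef, Multiset.card_map]
    exact (Finset.card_univ).trans (Fintype.card_fin _)
  have h0Mβ : (0 : ℂ) ∉ Mβ := by
    intro h
    obtain ⟨i, _, hi⟩ := Multiset.mem_map.mp h
    exact hβ0 i hi
  -- the candidate vectors
  set g : Finset (Fin (W - 1)) → Fin (W - 1) → ℂ :=
    fun I i => if i ∈ I then refl' (β i) else β i with hgdef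
  set MI : Finset (Fin (W - 1)) → Multiset ℂ :=
    fun I => Finset.univ.val.map (g I) with hMIdef
  set rI : Finset (Fin (W - 1)) → ℝ :=
    fun I => ‖c‖ * ∏ i ∈ I, ‖β i‖ with hrIdef
  set vp : Finset (Fin (W - 1)) → Polynomial ℂ :=
    fun I => Polynomial.C ((rI I : ℝ) : ℂ) *
      ((MI I).map fun z => Polynomial.X - Polynomial.C z).prod with hvpdef
  set v : Finset (Fin (W - 1)) → Fin W → ℂ :=
    fun I n => (vp I).coeff (n : ℕ) with hvdef
  have hMIcard : ∀ I, Multiset.card (MI I) = W - 1 := by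
    intro I
    rw [hMIdef]
    simp only [Multiset.card_map]
    exact (Finset.card_univ).trans (Fintype.card_fin _)
  have hrIpos : ∀ I, 0 < rI I := by
    intro I
    apply mul_pos (norm_pos_iff.mpr hc0)
    exact Finset.prod_pos fun i _ => norm_pos_iff.mpr (hβ0 i)
  have hrIne : ∀ I, ((rI I : ℝ) : ℂ) ≠ 0 := by
    intro I
    simp only [ne_eq, Complex.ofReal_eq_zero]
    exact (hrIpos I).ne'
  have hvpdeg : ∀ I, (vp I).natDegree = W - 1 := by
    intro I
    rw [hvpdef]
    rw [natDegree_C_mul_prod _ (hrIne I), hMIcard]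
  have hvtop : ∀ I, v I ⟨W - 1, hWm⟩ = ((rI I : ℝ) : ℂ) := by
    intro I
    show (vp I).coeff (W - 1) = _
    rw [hvpdef]
    have := coeff_top_C_mul_prod ((rI I : ℝ) : ℂ) (MI I)
    rwa [hMIcard] at this
  have hvne : ∀ I, v I ⟨W - 1, hWm⟩ ≠ 0 := by
    intro I
    rw [hvtop I]
    exact hrIne I
  have hMImem : ∀ I (i : Fin (W - 1)), refl' (β i) ∈ MI I ↔ i ∈ I := by
    intro I i
    constructor
    · intro h
      obtain ⟨j, _, hj⟩ := Multiset.mem_map.mp h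
      simp only [hgdef] at hj
      by_cases hjI : j ∈ I
      · rw [if_pos hjI] at hj
        rwa [← hrinj j i hj]
      · rw [if_neg hjI] at hj
        exact absurd hj (hbref j i)
    · intro h
      exact Multiset.mem_map.mpr ⟨i, Finset.mem_univ i, by rw [hgdef]; simp [h]⟩
  have hvpinj : ∀ I J, vp I = vp J → I = J := by
    intro I J h
    have hroots : MI I = MI J := by
      rw [← roots_C_mul_prod _ (hrIne I) (MI I), ← roots_C_mul_prod _ (hrIne J) (MI J)]
      show (vp I).roots = (vp J).roots
      rw [h]
    ext i
    rw [← hMImem I i, ← hMImem J i, hroots]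
  have hvinj : Function.Injective v := by
    intro I J h
    apply hvpinj
    apply poly_ext_of_coeff W _ _ (by rw [hvpdeg]; omega) (by rw [hvpdeg]; omega)
    intro n
    exact congrFun h n
  -- evaluation of the candidates
  have heval_vp : ∀ I (ω : ℂ),
      Polynomial.eval ω (vp I) = ((rI I : ℝ) : ℂ) * ∏ i, (ω - g I i) := by
    intro I ω
    simp only [hvpdef, hMIdef, Polynomial.eval_mul, Polynomial.eval_C,
      Polynomial.eval_multiset_prod, Multiset.map_map, Function.comp_def,
      Polynomial.eval_sub, Polynomial.eval_X, Finset.prod_eq_multiset_prod]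
  have hsum_v : ∀ I (ω : ℂ),
      ∑ n : Fin W, v I n * ω ^ (n : ℕ) = Polynomial.eval ω (vp I) := by
    intro I ω
    rw [Polynomial.eval_eq_sum_range' (n := W) (by rw [hvpdeg]; omega) ω,
      ← Fin.sum_univ_eq_sum_range]
  have habs_prod : ∀ (ω : ℂ), ‖ω‖ = 1 → ∀ I,
      ‖∑ n : Fin W, v I n * ω ^ (n : ℕ)‖
        = ‖∑ n : Fin W, y n * ω ^ (n : ℕ)‖ := by
    intro ω hω I
    rw [hsum_v, heval_vp, hfac ω, norm_mul, norm_mul, norm_prod, norm_prod]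
    have h1 : ‖((rI I : ℝ) : ℂ)‖
        = ‖c‖ * ∏ i ∈ I, ‖β i‖ := by
      rw [Complex.norm_real, Real.norm_eq_abs, abs_of_pos (hrIpos I)]
    rw [h1, mul_assoc]
    congr 1
    have hsplit : ∏ i ∈ I, ‖β i‖
        = ∏ i : Fin (W - 1), (if i ∈ I then ‖β i‖ else 1) := by
      rw [Finset.prod_ite_mem, Finset.univ_inter]
    rw [hsplit, ← Finset.prod_mul_distrib]
    apply Finset.prod_congr rfl
    intro i _
    simp only [hgdef]
    by_cases hiI : i ∈ I
    · rw [if_pos hiI, if_pos hiI]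
      exact abs_refl_root hω (hβ0 i)
    · rw [if_neg hiI, if_neg hiI, one_mul]

  -- completeness
  have hcomplete : ∀ y' : Fin W → ℂ, y' ⟨W - 1, hWm⟩ ≠ 0 →
      (∀ ω : ℂ, ‖ω‖ = 1 →
        ‖∑ n : Fin W, y' n * ω ^ (n : ℕ)‖
          = ‖∑ n : Fin W, y n * ω ^ (n : ℕ)‖) →
      ∃ I θ, y' = fun n => Complex.exp ((θ : ℝ) * Complex.I) * v I n := by
    intro y' hy' hint
    set P' := polyOf W y' with hP'def
    have hdeg : P'.natDegree = W - 1 := polyOf_natDegree W (by omega) y' hy'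
    have hP'ne : P' ≠ 0 := by
      intro h
      apply hy'
      have h2 := polyOf_coeff W y' ⟨W - 1, hWm⟩
      rw [← hP'def, h] at h2
      simpa using h2.symm
    set c' := P'.leadingCoeff with hc'def
    have hc'0 : c' ≠ 0 := Polynomial.leadingCoeff_ne_zero.mpr hP'ne
    set Mγ := P'.roots with hMγdef
    have hcardγ : Multiset.card Mγ = W - 1 := by
      rw [hMγdef, (Polynomial.splits_iff_card_roots).mp (IsAlgClosed.splits P'), hdeg]
    have hfact : P' = Polynomial.C c' * (Mγ.map fun z => Polynomial.X - Polynomial.C z).prod :=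
      (IsAlgClosed.splits P').eq_prod_roots
    have hevalP' : ∀ ω : ℂ, Polynomial.eval ω P' = c' * (Mγ.map fun z => ω - z).prod := by
      intro ω
      conv_lhs => rw [hfact]
      rw [Polynomial.eval_mul, Polynomial.eval_C, Polynomial.eval_multiset_prod,
        Multiset.map_map]
      congr 1
      congr 1
      apply Multiset.map_congr rfl
      intro z _
      simp
    have hsumP' : ∀ ω : ℂ, ∑ n : Fin W, y' n * ω ^ (n : ℕ) = Polynomial.eval ω P' :=
      fun ω => (polyOf_eval W y' ω).symm
    have hevalβ : ∀ ω : ℂ, c * (Mβ.map fun z => ω - z).prod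
        = ∑ n : Fin W, y n * ω ^ (n : ℕ) := by
      intro ω
      rw [hfac ω]
      congr 1
      rw [hMβdef, Multiset.map_map, Finset.prod_eq_multiset_prod]
      congr 1
    have hFeq : Fpoly c' Mγ = Fpoly c Mβ := by
      rw [← sub_eq_zero]
      apply Polynomial.eq_zero_of_infinite_isRoot
      apply Set.Infinite.mono ?_ circle_infinite
      intro ω hω
      simp only [Set.mem_setOf_eq] at hω ⊢
      show Polynomial.IsRoot _ ω
      rw [Polynomial.IsRoot, Polynomial.eval_sub, sub_eq_zero]
      rw [eval_Fpoly c' Mγ hω, eval_Fpoly c Mβ hω, hcardγ, hMβcard]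
      congr 1
      rw [show c' * (Mγ.map fun z => ω - z).prod = Polynomial.eval ω P' from (hevalP' ω).symm]
      rw [hevalβ ω, ← hsumP' ω]
      apply Complex.ofReal_inj.mpr
      rw [Complex.normSq_eq_norm_sq, Complex.normSq_eq_norm_sq, hint ω hω]
    have hγ0 : (0 : ℂ) ∉ Mγ := by
      intro h0
      have hL : Polynomial.eval 0 (Fpoly c' Mγ) = 0 := by
        rw [eval_Fpoly_zero]
        apply mul_eq_zero_of_right
        apply Multiset.prod_eq_zero
        exact Multiset.mem_map.mpr ⟨0, h0, neg_zero⟩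
      rw [hFeq, eval_Fpoly_zero] at hL
      rcases mul_eq_zero.mp hL with h | h
      · exact Complex.ofReal_ne_zero.mpr (Complex.normSq_pos.mpr hc0).ne' h
      · obtain ⟨z, hz, hz0⟩ := Multiset.mem_map.mp (Multiset.prod_eq_zero_iff.mp h)
        apply h0Mβ
        rwa [show z = 0 from by simpa using hz0] at hz
    have hfacL := Fpoly_factored c' Mγ hγ0
    have hfacR := Fpoly_factored c Mβ h0Mβ
    have hA'ne : ((Complex.normSq c' : ℝ) : ℂ) * (Mγ.map fun z => -(starRingEnd ℂ) z).prod ≠ 0 := by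
      apply mul_ne_zero (Complex.ofReal_ne_zero.mpr (Complex.normSq_pos.mpr hc'0).ne')
      apply Multiset.prod_ne_zero
      intro h
      obtain ⟨z, hz, hz0⟩ := Multiset.mem_map.mp h
      apply hγ0
      have hzz : z = 0 := by
        have := congrArg (starRingEnd ℂ) (neg_eq_zero.mp hz0)
        simpa using this
      rwa [hzz] at hz
    have hAne : ((Complex.normSq c : ℝ) : ℂ) * (Mβ.map fun z => -(starRingEnd ℂ) z).prod ≠ 0 := by
      apply mul_ne_zero (Complex.ofReal_ne_zero.mpr (Complex.normSq_pos.mpr hc0).ne')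
      apply Multiset.prod_ne_zero
      intro h
      obtain ⟨z, hz, hz0⟩ := Multiset.mem_map.mp h
      apply h0Mβ
      have hzz : z = 0 := by
        have := congrArg (starRingEnd ℂ) (neg_eq_zero.mp hz0)
        simpa using this
      rwa [hzz] at hz
    have hMeq : Mγ + Mγ.map refl' = Mβ + Mβ.map refl' := by
      have h1 : (Fpoly c' Mγ).roots = Mγ + Mγ.map refl' := by
        rw [hfacL]; exact roots_C_mul_prod _ hA'ne _
      have h2 : (Fpoly c Mβ).roots = Mβ + Mβ.map refl' := by
        rw [hfacR]; exact roots_C_mul_prod _ hAne _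
      rw [← h1, ← h2, hFeq]
    have hAeq : ((Complex.normSq c' : ℝ) : ℂ) * (Mγ.map fun z => -(starRingEnd ℂ) z).prod
        = ((Complex.normSq c : ℝ) : ℂ) * (Mβ.map fun z => -(starRingEnd ℂ) z).prod := by
      rw [hMeq] at hfacL
      have hQ := (monic_prod_XC (Mβ + Mβ.map refl')).ne_zero
      apply Polynomial.C_injective
      apply mul_right_cancel₀ hQ
      rw [← hfacL, ← hfacR, hFeq]
    obtain ⟨I, hI⟩ := key_comb β refl' (fun i => refl_refl (β i)) hβinj hrinj hbref Mγ
      (by rw [hcardγ, Fintype.card_fin]) hMeq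
    have hMγI : Mγ = MI I := by
      rw [hI]
      apply Multiset.map_congr rfl
      intro i _
      by_cases h : i ∈ I <;> simp [hgdef, h]
    have habs_prod2 : ∀ (a : ℂ) (M : Multiset ℂ),
        ‖((Complex.normSq a : ℝ) : ℂ) * (M.map fun z => -(starRingEnd ℂ) z).prod‖
          = Complex.normSq a * (M.map fun z => ‖z‖).prod := by
      intro a M
      rw [norm_mul, Complex.norm_real, Real.norm_eq_abs, _root_.abs_of_nonneg (Complex.normSq_nonneg a)]
      congr 1
      rw [show ‖(M.map fun z => -(starRingEnd ℂ) z).prod‖ = (normHom : ℂ →*₀ ℝ) (M.map fun z => -(starRingEnd ℂ) z).prod from rfl, map_multiset_prod, Multiset.map_map]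
      congr 1
      apply Multiset.map_congr rfl
      intro z _
      simp [Function.comp_def]
    have habsA := congrArg (‖·‖) hAeq
    rw [habs_prod2, habs_prod2] at habsA
    have hprodγ : ((Mγ.map fun z => ‖z‖)).prod
        = ∏ i : Fin (W - 1), ‖g I i‖ := by
      rw [hMγI, hMIdef]
      simp only [Multiset.map_map, Function.comp_def]
      rw [Finset.prod_eq_multiset_prod]
    have hprodβ : ((Mβ.map fun z => ‖z‖)).prod
        = ∏ i : Fin (W - 1), ‖β i‖ := by
      rw [hMβdef]
      simp only [Multiset.map_map, Function.comp_def]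
      rw [Finset.prod_eq_multiset_prod]
    rw [hprodγ, hprodβ] at habsA
    have hgabs : ∀ i : Fin (W - 1), ‖g I i‖
        = (if i ∈ I then ((‖β i‖) ^ 2)⁻¹ else 1) * ‖β i‖ := by
      intro i
      simp only [hgdef]
      by_cases hiI : i ∈ I
      · rw [if_pos hiI, if_pos hiI, refl']
        rw [norm_inv, Complex.norm_conj]
        have hb := norm_pos_iff.mpr (hβ0 i)
        field_simp
      · rw [if_neg hiI, if_neg hiI, one_mul]
    rw [Finset.prod_congr rfl (fun i _ => hgabs i), Finset.prod_mul_distrib,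
      Finset.prod_ite_mem, Finset.univ_inter] at habsA
    have hBpos : 0 < ∏ i ∈ I, ‖β i‖ :=
      Finset.prod_pos fun i _ => norm_pos_iff.mpr (hβ0 i)
    have hPpos : 0 < ∏ i : Fin (W - 1), ‖β i‖ :=
      Finset.prod_pos fun i _ => norm_pos_iff.mpr (hβ0 i)
    have hinv : ∏ i ∈ I, ((‖β i‖) ^ 2)⁻¹
        = ((∏ i ∈ I, ‖β i‖) ^ 2)⁻¹ := by
      rw [Finset.prod_inv_distrib, Finset.prod_pow]
    rw [hinv] at habsA
    have hsq : Complex.normSq c' = Complex.normSq c * (∏ i ∈ I, ‖β i‖) ^ 2 := by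
      have hBne := hBpos.ne'
      have hPne := hPpos.ne'
      field_simp at habsA
      nlinarith [habsA, sq_nonneg (∏ i ∈ I, ‖β i‖)]
    have habsc' : ‖c'‖ = rI I := by
      have h2 : (‖c'‖) ^ 2 = (rI I) ^ 2 := by
        rw [← Complex.normSq_eq_norm_sq, hsq, Complex.normSq_eq_norm_sq]
        show _ = (‖c‖ * ∏ i ∈ I, ‖β i‖) ^ 2
        ring
      rw [← Real.sqrt_sq (norm_nonneg c'),
        ← Real.sqrt_sq (hrIpos I).le, h2]
    set θ : ℝ := Complex.arg c' with hθdef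
    have hc'eq : c' = ((rI I : ℝ) : ℂ) * Complex.exp ((θ : ℝ) * Complex.I) := by
      conv_lhs => rw [← Complex.norm_mul_exp_arg_mul_I c']
      rw [habsc']
    have hP'v : P' = Polynomial.C (Complex.exp ((θ : ℝ) * Complex.I)) * vp I := by
      rw [hfact, hMγI, hc'eq, Polynomial.C_mul]
      show _ = Polynomial.C _ * (Polynomial.C _ * _)
      ring
    refine ⟨I, θ, ?_⟩
    funext n
    calc y' n = P'.coeff (n : ℕ) := (polyOf_coeff W y' n).symm
      _ = Complex.exp ((θ : ℝ) * Complex.I) * v I n := by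
          rw [hP'v, Polynomial.coeff_C_mul]
  -- assembling
  refine ⟨↑(Finset.univ.image v), Finset.finite_toSet _, ?_, ?_, ?_⟩
  · rw [Set.ncard_coe_finset, Finset.card_image_of_injective _ hvinj,
      Finset.card_univ, Fintype.card_finset, Fintype.card_fin]
  · intro w hw
    obtain ⟨I, _, rfl⟩ := Finset.mem_image.mp (by exact_mod_cast hw)
    exact ⟨hvne I, fun ω hω => habs_prod ω hω I⟩
  · intro y' hy' hint
    obtain ⟨I, θ, hIθ⟩ := hcomplete y' hy' hint
    refine ⟨v I, ⟨by
      simp only [Finset.coe_image, Finset.coe_univ, Set.image_univ, Set.mem_range]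
      exact ⟨I, rfl⟩, θ, hIθ⟩, ?_⟩
    rintro w ⟨hwS, θ', hθ'⟩
    obtain ⟨J, _, rfl⟩ := Finset.mem_image.mp (by exact_mod_cast hwS)
    have hnn : ∀ n, Complex.exp ((θ' : ℝ) * Complex.I) * v J n
        = Complex.exp ((θ : ℝ) * Complex.I) * v I n := by
      intro n
      exact (congrFun hθ' n).symm.trans (congrFun hIθ n)
    have htop := hnn ⟨W - 1, hWm⟩
    rw [hvtop I, hvtop J] at htop
    have habs2 := congrArg (‖·‖) htop
    rw [norm_mul, norm_mul, Complex.norm_exp_ofReal_mul_I, Complex.norm_exp_ofReal_mul_I,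
      one_mul, one_mul, Complex.norm_real, Complex.norm_real, Real.norm_eq_abs, Real.norm_eq_abs,
      abs_of_pos (hrIpos J), abs_of_pos (hrIpos I)] at habs2
    have hee : Complex.exp ((θ' : ℝ) * Complex.I) = Complex.exp ((θ : ℝ) * Complex.I) := by
      rw [habs2] at htop
      exact mul_right_cancel₀ (hrIne I) htop
    funext n
    have h3 := hnn n
    rw [hee] at h3
    exact mul_left_cancel₀ (Complex.exp_ne_zero _) h3
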